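/- arXiv:0901.0528 — 2 statements merged into one kernel-verified Lean document; each statement's English description precedes it below -/
import Mathlib

section
/- Let M be a compact, connected, closed (boundaryless) smooth manifold of dimension n ≥ 1. Then there exist an open subset C of M homeomorphic to ℝⁿ with complement K = M \ C, and a point c ∈ C, such that K is a deformation retract of M \ {c}: there is a continuous map F : (M \ {c}) × [0,1] → M \ {c} with F(x,0) = x for all x, F(x,1) ∈ K for all x, and F(z,t) = z for all z ∈ K and all t ∈ [0,1]. In particular M \ {c} and K are homotopy equivalent. -/
open scoped Manifold unitInterval

open Metric Set

section Aux

variable {E : Type*} [NormedAddCommGroup E] [NormedSpace ℝ E] [ProperSpace E]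
variable {M : Type*} [TopologicalSpace M] [T2Space M]

/-- radial scalar arithmetic -/
lemma radial_scalar_facts {t r ε : ℝ} (ht0 : 0 ≤ t) (ht1 : t ≤ 1) (hr : 0 < r) (hrε : r ≤ ε) :
    1 ≤ (1 - t) + t * (ε / r) ∧ ((1 - t) + t * (ε / r)) * r ≤ ε := by
  have h1 : 1 ≤ ε / r := (one_le_div hr).2 hrε
  have h2 : ε / r * r = ε := div_mul_cancel₀ ε hr.ne'
  constructor
  · nlinarith
  · nlinarith

/-- The core construction: given a chart and a ball inside its target, the punctured manifold
deformation retracts onto the complement of the preimage of the open ball. -/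
lemma chart_retract (φ : OpenPartialHomeomorph M E) (p : M) (hp : p ∈ φ.source)
    (ε : ℝ) (hε : 0 < ε) (hsub : Metric.closedBall (φ p) ε ⊆ φ.target) :
    ∃ F : ({p}ᶜ : Set M) × I → ({p}ᶜ : Set M),
      Continuous F ∧
      (∀ x, F (x, 0) = x) ∧
      (∀ x, (F (x, 1) : M) ∈ (φ.source ∩ φ ⁻¹' ball (φ p) ε)ᶜ) ∧
      (∀ z : ({p}ᶜ : Set M), (z : M) ∈ (φ.source ∩ φ ⁻¹' ball (φ p) ε)ᶜ → ∀ t, F (z, t) = z) := by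
  classical
  set ctr : E := φ p with hctr
  set C : Set M := φ.source ∩ φ ⁻¹' ball ctr ε with hC
  set D : Set M := φ.symm '' closedBall ctr ε with hD
  have hmemD : ∀ x : M, x ∈ D ↔ x ∈ φ.source ∧ φ x ∈ closedBall ctr ε := by
    intro x
    constructor
    · rintro ⟨y, hy, rfl⟩
      exact ⟨φ.map_target (hsub hy), by rwa [φ.right_inv (hsub hy)]⟩
    · rintro ⟨hx, hx'⟩
      exact ⟨φ x, hx', φ.left_inv hx⟩
  have hDcompact : IsCompact D :=
    (isCompact_closedBall ctr ε).image_of_continuousOn (φ.symm.continuousOn.mono hsub)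
  have hDclosed : IsClosed D := hDcompact.isClosed
  have hCD : C ⊆ D := fun x hx => (hmemD x).2 ⟨hx.1, ball_subset_closedBall hx.2⟩
  have hCopen : IsOpen C := φ.isOpen_inter_preimage isOpen_ball
  have hDsource : D ⊆ φ.source := fun x hx => ((hmemD x).1 hx).1
  -- the radial map
  set f : M × I → M := fun q =>
    φ.symm (ctr + ((1 - (q.2 : ℝ)) + (q.2 : ℝ) * (ε / ‖φ q.1 - ctr‖)) • (φ q.1 - ctr)) with hf
  -- basic facts about points in D different from p
  have hkey : ∀ q : M × I, q.1 ∈ D → q.1 ≠ p →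
      0 < ‖φ q.1 - ctr‖ ∧ ‖φ q.1 - ctr‖ ≤ ε := by
    intro q hqD hqp
    have hsrc := hDsource hqD
    have hne : φ q.1 ≠ ctr := fun h => hqp (φ.injOn hsrc hp h)
    refine ⟨norm_pos_iff.2 (sub_ne_zero.2 hne), ?_⟩
    have := ((hmemD q.1).1 hqD).2
    rwa [mem_closedBall, dist_eq_norm] at this
  -- norm of the displaced point
  have hwnorm : ∀ q : M × I, q.1 ∈ D → q.1 ≠ p →
      ‖(ctr + ((1 - (q.2 : ℝ)) + (q.2 : ℝ) * (ε / ‖φ q.1 - ctr‖)) • (φ q.1 - ctr)) - ctr‖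
        = ((1 - (q.2 : ℝ)) + (q.2 : ℝ) * (ε / ‖φ q.1 - ctr‖)) * ‖φ q.1 - ctr‖ := by
    intro q hqD hqp
    obtain ⟨hr, hrε⟩ := hkey q hqD hqp
    obtain ⟨ha, _⟩ := radial_scalar_facts q.2.2.1 q.2.2.2 hr hrε
    rw [add_sub_cancel_left, norm_smul, Real.norm_eq_abs, abs_of_pos (by linarith)]
  have hwmem : ∀ q : M × I, q.1 ∈ D → q.1 ≠ p →
      (ctr + ((1 - (q.2 : ℝ)) + (q.2 : ℝ) * (ε / ‖φ q.1 - ctr‖)) • (φ q.1 - ctr))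
        ∈ closedBall ctr ε := by
    intro q hqD hqp
    obtain ⟨hr, hrε⟩ := hkey q hqD hqp
    obtain ⟨_, hle⟩ := radial_scalar_facts q.2.2.1 q.2.2.2 hr hrε
    rw [mem_closedBall, dist_eq_norm, hwnorm q hqD hqp]
    exact hle
  have hwne : ∀ q : M × I, q.1 ∈ D → q.1 ≠ p →
      (ctr + ((1 - (q.2 : ℝ)) + (q.2 : ℝ) * (ε / ‖φ q.1 - ctr‖)) • (φ q.1 - ctr)) ≠ ctr := by
    intro q hqD hqp h
    obtain ⟨hr, hrε⟩ := hkey q hqD hqp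
    obtain ⟨ha, _⟩ := radial_scalar_facts q.2.2.1 q.2.2.2 hr hrε
    have := hwnorm q hqD hqp
    rw [h, sub_self, norm_zero] at this
    nlinarith
  have hfne : ∀ q : M × I, q.1 ∈ D → q.1 ≠ p → f q ≠ p := by
    intro q hqD hqp h
    have hmem := hwmem q hqD hqp
    have h' : φ.symm (ctr + ((1 - (q.2 : ℝ)) + (q.2 : ℝ) * (ε / ‖φ q.1 - ctr‖)) • (φ q.1 - ctr))
        = p := h
    have hc : φ.symm ctr = p := φ.left_inv hp
    exact hwne q hqD hqp (φ.symm.injOn (hsub hmem) (φ.map_source hp) (h'.trans hc.symm))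
  -- on D with boundary norm, f is the identity
  have hfid : ∀ q : M × I, q.1 ∈ D → q.1 ≠ p → ‖φ q.1 - ctr‖ = ε → f q = q.1 := by
    intro q hqD hqp hnorm
    have hsrc := hDsource hqD
    have hr : (0:ℝ) < ε := hε
    have : (1 - (q.2 : ℝ)) + (q.2 : ℝ) * (ε / ‖φ q.1 - ctr‖) = 1 := by
      rw [hnorm, div_self hr.ne']; ring
    rw [hf]; simp only [this, one_smul, add_sub_cancel]
    exact φ.left_inv hsrc
  -- points of D not in C lie on the boundary sphere
  have hbdry : ∀ x : M, x ∈ D → x ∉ C → ‖φ x - ctr‖ = ε := by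
    intro x hxD hxC
    obtain ⟨hsrc, hcb⟩ := (hmemD x).1 hxD
    rw [mem_closedBall, dist_eq_norm] at hcb
    have : φ x ∉ ball ctr ε := fun h => hxC ⟨hsrc, h⟩
    rw [mem_ball, dist_eq_norm, not_lt] at this
    linarith
  -- the glued map
  set G : M × I → M := fun q => if q.1 ∈ D then f q else q.1 with hG
  have hGne : ∀ q : M × I, q.1 ≠ p → G q ≠ p := by
    intro q hqp
    rw [hG]
    by_cases h : q.1 ∈ D
    · simpa [h] using hfne q h hqp
    · simpa [h] using hqp
  -- continuity of G on {q | q.1 ≠ p}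
  have hfcont : ContinuousOn f {q : M × I | q.1 ∈ D ∧ q.1 ≠ p} := by
    have h1 : ContinuousOn (fun q : M × I => φ q.1) {q : M × I | q.1 ∈ D ∧ q.1 ≠ p} :=
      φ.continuousOn.comp continuous_fst.continuousOn (fun q hq => hDsource hq.1)
    have h2 : ContinuousOn (fun q : M × I => (q.2 : ℝ)) {q : M × I | q.1 ∈ D ∧ q.1 ≠ p} :=
      (continuous_subtype_val.comp continuous_snd).continuousOn
    have h3 : ContinuousOn (fun q : M × I => ‖φ q.1 - ctr‖) _ :=
      (h1.sub continuousOn_const).norm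
    have h4 : ContinuousOn (fun q : M × I => ε / ‖φ q.1 - ctr‖) {q : M × I | q.1 ∈ D ∧ q.1 ≠ p} :=
      continuousOn_const.div h3 (fun q hq => (hkey q hq.1 hq.2).1.ne')
    have h5 : ContinuousOn (fun q : M × I =>
        ctr + ((1 - (q.2 : ℝ)) + (q.2 : ℝ) * (ε / ‖φ q.1 - ctr‖)) • (φ q.1 - ctr))
        {q : M × I | q.1 ∈ D ∧ q.1 ≠ p} :=
      continuousOn_const.add
        (((continuousOn_const.sub h2).add (h2.mul h4)).smul (h1.sub continuousOn_const))
    exact φ.symm.continuousOn.comp h5 (fun q hq => hsub (hwmem q hq.1 hq.2))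
  have hGcont : ContinuousOn G ({p}ᶜ ×ˢ (univ : Set I)) := by
    rw [hG]
    apply ContinuousOn.if
    · intro a ha
      have hfr : a.1 ∈ frontier D := by
        have : frontier {q : M × I | q.1 ∈ D} ⊆ Prod.fst ⁻¹' frontier D := by
          have : {q : M × I | q.1 ∈ D} = Prod.fst ⁻¹' D := rfl
          rw [this]
          exact continuous_fst.frontier_preimage_subset D
        exact this ha.2
      have haD : a.1 ∈ D := hDclosed.frontier_subset hfr
      have hCi : C ⊆ interior D := hCopen.subset_interior_iff.2 hCD
      have haC : a.1 ∉ C := fun h => hfr.2 (hCi h)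
      have hap : a.1 ≠ p := Set.mem_compl_singleton_iff.1 ha.1.1
      exact hfid a haD hap (hbdry a.1 haD haC)
    · have hcl : closure {q : M × I | q.1 ∈ D} = {q : M × I | q.1 ∈ D} :=
        (hDclosed.preimage continuous_fst).closure_eq
      rw [hcl]
      exact hfcont.mono (fun q hq => ⟨hq.2, Set.mem_compl_singleton_iff.1 hq.1.1⟩)
    · exact continuous_fst.continuousOn.mono inter_subset_left
  -- assemble F
  refine ⟨fun x => ⟨G (x.1.1, x.2), hGne _ (Set.mem_compl_singleton_iff.1 x.1.2)⟩, ?_, ?_, ?_, ?_⟩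
  · apply Continuous.subtype_mk
    apply hGcont.comp_continuous
    · exact (continuous_subtype_val.comp continuous_fst).prodMk continuous_snd
    · intro x
      exact ⟨x.1.2, mem_univ _⟩
  · intro x
    apply Subtype.ext
    show G (x.1, (0:I)) = x.1
    rw [hG]
    by_cases h : (x : M) ∈ D
    · have hsrc := hDsource h
      simp only [h, if_pos]
      show φ.symm (ctr + ((1 - ((0:I) : ℝ)) + ((0:I) : ℝ) * (ε / ‖φ x.1 - ctr‖)) • (φ x.1 - ctr))
          = x.1
      have hcc : ctr + (φ x.1 - ctr) = φ x.1 := by abel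
      simp only [Icc.coe_zero, sub_zero, zero_mul, add_zero, one_smul, hcc]
      exact φ.left_inv hsrc
    · simp [h]
  · intro x
    have hxp : (x : M) ≠ p := Set.mem_compl_singleton_iff.1 x.2
    show G (x.1, (1:I)) ∈ Cᶜ
    rw [hG]
    by_cases h : (x : M) ∈ D
    · simp only [h, if_pos]
      intro hmemC
      obtain ⟨hr, hrε⟩ := hkey (x.1, (1:I)) h hxp
      have hw := hwmem (x.1, (1:I)) h hxp
      have : φ (f (x.1, (1:I))) =
          ctr + ((1 - ((1:I) : ℝ)) + ((1:I) : ℝ) * (ε / ‖φ x.1 - ctr‖)) • (φ x.1 - ctr) := by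
        rw [hf]
        exact φ.right_inv (hsub hw)
      have h2 := hmemC.2
      rw [mem_preimage, this, mem_ball, dist_eq_norm] at h2
      rw [hwnorm (x.1, (1:I)) h hxp] at h2
      simp only [Icc.coe_one, sub_self, zero_add, one_mul] at h2
      rw [div_mul_cancel₀ _ hr.ne'] at h2
      exact lt_irrefl _ h2
    · simp only [h, if_neg, not_false_iff]
      exact fun hc => h (hCD hc)
  · intro z hz t
    apply Subtype.ext
    have hzp : (z : M) ≠ p := Set.mem_compl_singleton_iff.1 z.2
    show G (z.1, t) = z.1
    rw [hG]
    by_cases h : (z : M) ∈ D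
    · simp only [h, if_pos]
      exact hfid (z.1, t) h hzp (hbdry z.1 h hz)
    · simp [h]

end Aux

/-- **Theorem 2.** For a compact, connected, closed smooth `n`-manifold `M` (`n ≥ 1`) there are
an open cell `C ≃ₜ ℝⁿ` with complement `K = M \ C` and a point `c ∈ C` such that `K` is a
deformation retract of `M \ {c}`: there is a continuous `F : (M \ {c}) × [0,1] → M \ {c}` with
`F (x, 0) = x`, `F (x, 1) ∈ K`, and `F (z, t) = z` for `z ∈ K`.  In particular `M \ {c}` and `K`
are homotopy equivalent. -/
theorem punctured_manifold_deformation_retracts_onto_complement_of_cell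
    {n : ℕ} (hn : 1 ≤ n) (M : Type*) [TopologicalSpace M] [T2Space M]
    [ChartedSpace (EuclideanSpace ℝ (Fin n)) M]
    [IsManifold (𝓡 n) (⊤ : ℕ∞) M] [CompactSpace M] [ConnectedSpace M] :
    ∃ C : Set M, IsOpen C ∧ Nonempty (C ≃ₜ EuclideanSpace ℝ (Fin n)) ∧
      ∃ c ∈ C, ∃ F : ({c}ᶜ : Set M) × I → ({c}ᶜ : Set M),
        Continuous F ∧
        (∀ x, F (x, 0) = x) ∧
        (∀ x, (F (x, 1) : M) ∈ Cᶜ) ∧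
        (∀ z : ({c}ᶜ : Set M), (z : M) ∈ Cᶜ → ∀ t, F (z, t) = z) := by
  classical
  set E := EuclideanSpace ℝ (Fin n)
  obtain ⟨p⟩ : Nonempty M := inferInstance
  set φ : OpenPartialHomeomorph M E := chartAt E p with hφ
  have hp : p ∈ φ.source := mem_chart_source E p
  have hct : φ p ∈ φ.target := φ.map_source hp
  obtain ⟨r, hr, hball⟩ := Metric.isOpen_iff.1 φ.open_target (φ p) hct
  set ε : ℝ := r / 2 with hε'
  have hε : 0 < ε := by positivity
  have hsub : closedBall (φ p) ε ⊆ φ.target :=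
    (closedBall_subset_ball (by linarith)).trans hball
  set C : Set M := φ.source ∩ φ ⁻¹' ball (φ p) ε with hC
  have hCopen : IsOpen C := φ.isOpen_inter_preimage isOpen_ball
  -- the homeomorphism C ≃ₜ E
  have hne : Nonempty (C ≃ₜ E) := by
    set e : OpenPartialHomeomorph E M := φ.symm.restrOpen (ball (φ p) ε) isOpen_ball with he
    have hsrc : e.source = ball (φ p) ε := by
      rw [he, OpenPartialHomeomorph.restrOpen_source]
      exact inter_eq_self_of_subset_right ((ball_subset_closedBall).trans hsub)
    have htgt : e.target = C := rfl
    set ub : OpenPartialHomeomorph E E := OpenPartialHomeomorph.univBall (φ p) ε with hub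
    have hubs : ub.source = univ := OpenPartialHomeomorph.univBall_source (φ p) ε
    have hubt : ub.target = ball (φ p) ε := OpenPartialHomeomorph.univBall_target (φ p) hε
    exact ⟨((Homeomorph.setCongr htgt).symm.trans e.toHomeomorphSourceTarget.symm).trans
      (((Homeomorph.setCongr (hsrc.trans hubt.symm)).trans
        ub.toHomeomorphSourceTarget.symm).trans
        ((Homeomorph.setCongr hubs).trans (Homeomorph.Set.univ E)))⟩
  obtain ⟨F, hFc, hF0, hF1, hFz⟩ := chart_retract φ p hp ε hε hsub
  exact ⟨C, hCopen, hne, p, ⟨hp, mem_ball_self hε⟩, F, hFc, hF0, hF1, hFz⟩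
end

section
/- Let M be a compact, connected, closed (boundaryless) smooth manifold of dimension n ≥ 1. Then there exist an open subset C of M homeomorphic to ℝⁿ with complement K = M \ C and a point c ∈ C such that for every basepoint z ∈ K, the fundamental group of M \ {c} at z is isomorphic to the fundamental group of K at z. -/
open Metric Set CategoryTheory

noncomputable section

variable {E : Type*} [NormedAddCommGroup E] [NormedSpace ℝ E]
variable [ProperSpace E]
variable {M : Type*} [TopologicalSpace M] [T2Space M]

/-- Main auxiliary lemma: radial strong deformation retraction of a punctured chart ball. -/
lemma aux_retract (φ : OpenPartialHomeomorph M E) (c : M) (hcs : c ∈ φ.source)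
    (r : ℝ) (hr0 : 0 < r) (hrt : Metric.closedBall (φ c) r ⊆ φ.target)
    (C : Set M) (hC : C = φ.source ∩ φ ⁻¹' Metric.ball (φ c) r)
    (z : M) (hz : z ∈ Cᶜ) (hzc : z ∈ ({c}ᶜ : Set M)) :
    Nonempty
      (FundamentalGroup (({c}ᶜ : Set M)) ⟨z, hzc⟩ ≃*
        FundamentalGroup (Cᶜ : Set M) ⟨z, hz⟩) := by
  classical
  subst hC
  set C : Set M := φ.source ∩ φ ⁻¹' Metric.ball (φ c) r with hC
  have hct : φ c ∈ φ.target := φ.map_source hcs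
  set D : Set M := φ.symm '' Metric.closedBall (φ c) r with hD
  have hDclosed : IsClosed D :=
    (((isCompact_closedBall _ _).image_of_continuousOn
      (φ.continuousOn_symm.mono hrt))).isClosed
  have hDsource : D ⊆ φ.source := by
    rintro _ ⟨p, hp, rfl⟩; exact φ.map_target (hrt hp)
  have hDmem : ∀ m ∈ D, φ m ∈ Metric.closedBall (φ c) r := by
    rintro _ ⟨p, hp, rfl⟩; rwa [φ.right_inv (hrt hp)]
  have hmemD : ∀ m ∈ φ.source, φ m ∈ Metric.closedBall (φ c) r → m ∈ D :=
    fun m hm h => ⟨φ m, h, φ.left_inv hm⟩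
  have hCD : C ⊆ D := by
    rintro m ⟨h1, h2⟩
    exact hmemD m h1 (ball_subset_closedBall h2)
  have hCopen : IsOpen C := φ.isOpen_inter_preimage isOpen_ball
  have hcC : c ∈ C := ⟨hcs, by simpa using hr0⟩
  -- the chart-level data
  set u : M → E := fun m => φ m - φ c with hu
  set co : ℝ → M → ℝ := fun t m => (1 - t) + t * r / ‖u m‖ with hco
  set g : ℝ → M → M := fun t m => φ.symm (φ c + co t m • u m) with hg
  -- basic facts about u
  have hune : ∀ m ∈ D, m ≠ c → u m ≠ 0 := by
    intro m hm hmc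
    exact sub_ne_zero.mpr (fun h => hmc (φ.injOn (hDsource hm) hcs h))
  have huler : ∀ m ∈ D, ‖u m‖ ≤ r := by
    intro m hm
    have := hDmem m hm
    rwa [Metric.mem_closedBall, dist_eq_norm] at this
  -- the argument of φ.symm is in the closed ball
  have harg_mem : ∀ (t : ℝ) (m : M), 0 ≤ t → t ≤ 1 → m ∈ D → m ≠ c →
      φ c + co t m • u m ∈ Metric.closedBall (φ c) r := by
    intro t m ht0 ht1 hm hmc
    have hun : 0 < ‖u m‖ := norm_pos_iff.mpr (hune m hm hmc)
    have hco0 : 0 ≤ co t m :=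
      add_nonneg (by linarith) (div_nonneg (mul_nonneg ht0 hr0.le) hun.le)
    have hnorm : ‖co t m • u m‖ = (1 - t) * ‖u m‖ + t * r := by
      rw [norm_smul, Real.norm_eq_abs, abs_of_nonneg hco0, hco]
      field_simp
    rw [Metric.mem_closedBall, dist_eq_norm, add_sub_cancel_left, hnorm]
    nlinarith [huler m hm]
  have harg_ne : ∀ (t : ℝ) (m : M), 0 ≤ t → t ≤ 1 → m ∈ D → m ≠ c →
      φ c + co t m • u m ≠ φ c := by
    intro t m ht0 ht1 hm hmc h
    have hun : 0 < ‖u m‖ := norm_pos_iff.mpr (hune m hm hmc)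
    have hsmul : co t m • u m = 0 := by
      have := congrArg (· - φ c) h
      simpa using this
    have hcop : 0 < co t m := by
      rcases lt_or_ge t 1 with h1 | h1
      · have : 0 < (1 - t) := by linarith
        have : 0 ≤ t * r / ‖u m‖ := div_nonneg (mul_nonneg ht0 hr0.le) hun.le
        simp only [hco]
        linarith
      · have ht : t = 1 := le_antisymm ht1 h1
        have : 0 < t * r / ‖u m‖ := by
          rw [ht, one_mul]; exact div_pos hr0 hun
        simp only [hco]
        linarith
    exact (hune m hm hmc) (by simpa [smul_eq_zero, hcop.ne'] using hsmul)
  have hg_ne : ∀ (t : ℝ) (m : M), 0 ≤ t → t ≤ 1 → m ∈ D → m ≠ c → g t m ≠ c := by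
    intro t m ht0 ht1 hm hmc h
    have harg := harg_mem t m ht0 ht1 hm hmc
    have : φ c + co t m • u m = φ c := by
      have h1 : φ.symm (φ c + co t m • u m) = φ.symm (φ c) := by
        rw [← φ.left_inv hcs] at h; exact h
      exact φ.symm.injOn (hrt harg) hct h1
    exact harg_ne t m ht0 ht1 hm hmc this
  -- boundary: if ‖u m‖ = r then g t m = m
  have hbdry : ∀ (t : ℝ) (m : M), m ∈ φ.source → ‖u m‖ = r → g t m = m := by
    intro t m hms hur
    have : co t m = 1 := by
      simp only [hco, hur]
      field_simp
      ring
    rw [hg]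
    simp only [this, one_smul, hu, add_sub_cancel]
    exact φ.left_inv hms
  -- t = 0 : g 0 m = m
  have hzero : ∀ m : M, m ∈ D → m ≠ c → g 0 m = m := by
    intro m hm hmc
    have : co 0 m = 1 := by simp [hco]
    rw [hg]
    simp only [this, one_smul, hu, add_sub_cancel]
    exact φ.left_inv (hDsource hm)
  -- t = 1 : g 1 m is on the sphere, hence not in C
  have hone : ∀ m : M, m ∈ D → m ≠ c → g 1 m ∈ Cᶜ := by
    intro m hm hmc
    have harg := harg_mem 1 m zero_le_one le_rfl hm hmc
    have hgs : g 1 m ∈ φ.source := φ.map_target (hrt harg)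
    have hφg : φ (g 1 m) = φ c + co 1 m • u m := φ.right_inv (hrt harg)
    have hun : 0 < ‖u m‖ := norm_pos_iff.mpr (hune m hm hmc)
    have hnorm : ‖φ (g 1 m) - φ c‖ = r := by
      rw [hφg, add_sub_cancel_left, norm_smul, Real.norm_eq_abs]
      have hco1 : co 1 m = r / ‖u m‖ := by simp [hco]
      rw [hco1, abs_of_nonneg (div_nonneg hr0.le hun.le)]
      field_simp
    intro hmC
    have : dist (φ (g 1 m)) (φ c) < r := hmC.2
    rw [dist_eq_norm, hnorm] at this
    exact lt_irrefl r this
  -- the subtypes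
  set Xt := ({c}ᶜ : Set M)
  set Kt := (Cᶜ : Set M)
  -- the homotopy map on I × Xt, valued in M
  set F : unitInterval × Xt → M :=
    fun a => if (a.2 : M) ∈ D then g a.1 (a.2 : M) else (a.2 : M) with hF
  have hmem_ne : ∀ x : Xt, (x : M) ≠ c := fun x => x.2
  have hFne : ∀ a, F a ≠ c := by
    intro a
    rw [hF]
    dsimp only
    split_ifs with h
    · exact hg_ne a.1 a.2 a.1.2.1 a.1.2.2 h (hmem_ne a.2)
    · exact hmem_ne a.2
  -- continuity
  have hSclosed : IsClosed {a : unitInterval × Xt | (a.2 : M) ∈ D} :=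
    hDclosed.preimage (continuous_subtype_val.comp continuous_snd)
  have hfrontier : frontier {a : unitInterval × Xt | (a.2 : M) ∈ D} ⊆
      {a | (a.2 : M) ∈ D ∧ (a.2 : M) ∉ C} := by
    intro a ha
    constructor
    · exact hSclosed.closure_subset ha.1
    · intro haC
      have hopen : IsOpen {a : unitInterval × Xt | (a.2 : M) ∈ C} :=
        hCopen.preimage (continuous_subtype_val.comp continuous_snd)
      have hsub : {a : unitInterval × Xt | (a.2 : M) ∈ C} ⊆
          {a : unitInterval × Xt | (a.2 : M) ∈ D} := fun b hb => hCD hb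
      exact ha.2 (interior_maximal hsub hopen haC)
  have hFcont : Continuous F := by
    rw [hF]
    apply continuous_if
    · intro a ha
      obtain ⟨haD, haC⟩ := hfrontier ha
      have hms : (a.2 : M) ∈ φ.source := hDsource haD
      have hur : ‖u (a.2 : M)‖ = r := by
        have h1 : ‖u (a.2 : M)‖ ≤ r := huler _ haD
        have h2 : r ≤ ‖u (a.2 : M)‖ := by
          by_contra h
          push_neg at h
          exact haC ⟨hms, by rwa [Set.mem_preimage, Metric.mem_ball, dist_eq_norm]⟩
        linarith
      exact hbdry _ _ hms hur
    · have hval : Continuous (fun a : unitInterval × Xt => (a.2 : M)) :=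
        continuous_subtype_val.comp continuous_snd
      have ht : Continuous (fun a : unitInterval × Xt => (a.1 : ℝ)) :=
        continuous_subtype_val.comp continuous_fst
      have hφm : ContinuousOn (fun a : unitInterval × Xt => φ (a.2 : M))
          {a : unitInterval × Xt | (a.2 : M) ∈ D} :=
        φ.continuousOn.comp hval.continuousOn (fun a ha => hDsource ha)
      have hum : ContinuousOn (fun a : unitInterval × Xt => u (a.2 : M))
          {a : unitInterval × Xt | (a.2 : M) ∈ D} := hφm.sub continuousOn_const
      have hnorm_ne : ∀ a ∈ {a : unitInterval × Xt | (a.2 : M) ∈ D}, ‖u (a.2 : M)‖ ≠ 0 :=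
        fun a ha => norm_ne_zero_iff.mpr (hune _ ha (hmem_ne a.2))
      have hcoeff : ContinuousOn (fun a : unitInterval × Xt => co (a.1 : ℝ) (a.2 : M))
          {a : unitInterval × Xt | (a.2 : M) ∈ D} := by
        apply ContinuousOn.add
        · exact (continuous_const.sub ht).continuousOn
        · exact ((ht.mul continuous_const).continuousOn).div hum.norm hnorm_ne
      have hinner : ContinuousOn
          (fun a : unitInterval × Xt => φ c + co (a.1 : ℝ) (a.2 : M) • u (a.2 : M))
          {a : unitInterval × Xt | (a.2 : M) ∈ D} :=
        continuousOn_const.add (hcoeff.smul hum)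
      have hsub : ContinuousOn (fun a : unitInterval × Xt => g (a.1 : ℝ) (a.2 : M))
          {a : unitInterval × Xt | (a.2 : M) ∈ D} :=
        φ.continuousOn_symm.comp hinner (fun a ha =>
          hrt (harg_mem _ _ a.1.2.1 a.1.2.2 ha (hmem_ne a.2)))
      exact hsub.mono (by rw [hSclosed.closure_eq])
    · exact (continuous_subtype_val.comp continuous_snd).continuousOn
  -- value at t = 1 lands in Cᶜ
  have hF1 : ∀ x : Xt, F (1, x) ∈ Cᶜ := by
    intro x
    rw [hF]; dsimp only
    split_ifs with h
    · exact hone (x : M) h (hmem_ne x)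
    · exact fun hc => h (hCD hc)
  -- value at t = 0 is the identity
  have hF0 : ∀ x : Xt, F (0, x) = (x : M) := by
    intro x
    rw [hF]; dsimp only
    split_ifs with h
    · simpa using hzero (x : M) h (hmem_ne x)
    · rfl
  -- the maps
  let ι : C(Kt, Xt) :=
    ⟨fun w => ⟨(w : M), fun h => w.2 (h ▸ hcC)⟩,
      continuous_subtype_val.subtype_mk _⟩
  let ρ : C(Xt, Kt) :=
    ⟨fun x => ⟨F (1, x), hF1 x⟩,
      (hFcont.comp (Continuous.prodMk_right (1 : unitInterval))).subtype_mk _⟩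
  have hρι : ρ.comp ι = ContinuousMap.id Kt := by
    ext w
    show F (1, ι w) = (w : M)
    rw [hF]; dsimp only
    split_ifs with h
    · have hms : (w : M) ∈ φ.source := hDsource h
      have hur : ‖u (w : M)‖ = r := by
        have h1 : ‖u (w : M)‖ ≤ r := huler _ h
        have h2 : r ≤ ‖u (w : M)‖ := by
          by_contra hlt
          push_neg at hlt
          exact w.2 ⟨hms, by rwa [Set.mem_preimage, Metric.mem_ball, dist_eq_norm]⟩
        linarith
      exact hbdry _ _ hms hur
    · rfl
  let H : ContinuousMap.Homotopy (ContinuousMap.id Xt) (ι.comp ρ) :=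
    { toFun := fun a => ⟨F a, hFne a⟩
      continuous_toFun := hFcont.subtype_mk hFne
      map_zero_left := fun x => Subtype.ext (hF0 x)
      map_one_left := fun x => Subtype.ext rfl }
  let hequiv : ContinuousMap.HomotopyEquiv Kt Xt :=
    { toFun := ι
      invFun := ρ
      left_inv := by rw [hρι]
      right_inv := ⟨H.symm⟩ }
  let e := FundamentalGroupoidFunctor.equivOfHomotopyEquiv hequiv
  let ff := e.fullyFaithfulFunctor
  exact ⟨(ff.mulEquivEnd (C := FundamentalGroupoid Kt) (D := FundamentalGroupoid Xt)
    (FundamentalGroupoid.mk (⟨z, hz⟩ : Kt))).symm⟩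

end

open scoped Manifold

/-- For a compact, connected, closed smooth `n`-manifold `M` (`n ≥ 1`) there are an open cell
`C ≃ₜ ℝⁿ` and a point `c` ∈ C` such that for every basepoint `z` in `K = M \ C`, the
fundamental group of `M \ {c}` at `z` is isomorphic to that of `K` at `z`. -/
theorem fundamentalGroup_punctured_manifold_iso_complement
    {n : ℕ} (hn : 1 ≤ n) (M : Type*) [TopologicalSpace M] [T2Space M]
    [ChartedSpace (EuclideanSpace ℝ (Fin n)) M]
    [IsManifold (𝓡 n) (⊤ : ℕ∞) M] [CompactSpace M] [ConnectedSpace M] :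
    ∃ C : Set M, IsOpen C ∧ Nonempty (C ≃ₜ EuclideanSpace ℝ (Fin n)) ∧
      ∃ c : M, ∃ hc : c ∈ C, ∀ z : M, ∀ hz : z ∈ Cᶜ,
        Nonempty
          (FundamentalGroup (({c}ᶜ : Set M)) ⟨z, fun h => (h ▸ hz) hc⟩ ≃*
            FundamentalGroup (Cᶜ : Set M) ⟨z, hz⟩) := by
  classical
  obtain ⟨c⟩ : Nonempty M := inferInstance
  set φ := chartAt (EuclideanSpace ℝ (Fin n)) c with hφ
  have hcs : c ∈ φ.source := mem_chart_source _ c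
  have hct : φ c ∈ φ.target := φ.map_source hcs
  obtain ⟨r, hr0, hrt⟩ : ∃ r > 0, Metric.closedBall (φ c) r ⊆ φ.target := by
    obtain ⟨r, hr, h⟩ := Metric.isOpen_iff.mp φ.open_target _ hct
    exact ⟨r / 2, by linarith, (Metric.closedBall_subset_ball (by linarith)).trans h⟩
  have hballt : Metric.ball (φ c) r ⊆ φ.target := ball_subset_closedBall.trans hrt
  set C : Set M := φ.source ∩ φ ⁻¹' Metric.ball (φ c) r with hC
  have hCopen : IsOpen C := φ.isOpen_inter_preimage isOpen_ball
  have hcC : c ∈ C := ⟨hcs, by simpa using hr0⟩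
  have homeo : Nonempty (C ≃ₜ EuclideanSpace ℝ (Fin n)) := by
    refine ⟨Homeomorph.trans (?_ : ↥C ≃ₜ ↥(Metric.ball (φ c) r)) ?_⟩
    · exact
        { toFun := fun m => ⟨φ m.1, m.2.2⟩
          invFun := fun p => ⟨φ.symm p.1,
            ⟨φ.map_target (hballt p.2), by
              have := φ.right_inv (hballt p.2)
              simp only [Set.mem_preimage, this]
              exact p.2⟩⟩
          left_inv := fun m => Subtype.ext (φ.left_inv m.2.1)
          right_inv := fun p => Subtype.ext (φ.right_inv (hballt p.2))
          continuous_toFun := by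
            apply Continuous.subtype_mk
            exact φ.continuousOn.comp_continuous continuous_subtype_val fun m => m.2.1
          continuous_invFun := by
            apply Continuous.subtype_mk
            exact φ.continuousOn_symm.comp_continuous continuous_subtype_val
              fun p => hballt p.2 }
    · exact (Homeomorph.setCongr (OpenPartialHomeomorph.univBall_target (φ c) hr0)).symm.trans
        (((OpenPartialHomeomorph.univBall (φ c) r).toHomeomorphSourceTarget).symm.trans
          ((Homeomorph.setCongr (OpenPartialHomeomorph.univBall_source (φ c) r)).trans
            (Homeomorph.Set.univ _)))
  refine ⟨C, hCopen, homeo, c, hcC, fun z hz => ?_⟩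
  exact aux_retract φ c hcs r hr0 hrt C hC z hz (fun h => (h ▸ hz) hcC)
end
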